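/- Every fair division instance with matroid-rank valuations admits a partial allocation, with each bundle independent in the respective agent's matroid, that simultaneously maximizes social welfare over all n-partitions of the goods and satisfies the pairwise maximin share guarantee: v_i(A_i) ≥ μ_i(2, A_i ∪ A_j) for all agents i, j. -/

import Mathlib

structure FinMatroid (E : Type*) [Fintype E] [DecidableEq E] where
  Indep : Finset E → Prop
  empty_indep : Indep ∅
  subset_indep : ∀ ⦃I J : Finset E⦄, Indep I → J ⊆ I → Indep J
  aug : ∀ ⦃I J : Finset E⦄, Indep I → Indep J → I.card < J.card →
    ∃ g ∈ J \ I, Indep (insert g I)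

noncomputable def FinMatroid.rank {E : Type*} [Fintype E] [DecidableEq E]
    (M : FinMatroid E) (S : Finset E) : ℕ :=
  sSup {t | ∃ I : Finset E, I ⊆ S ∧ M.Indep I ∧ I.card = t}

section RankLemmas
variable {E : Type*} [Fintype E] [DecidableEq E] (M : FinMatroid E)

lemma FinMatroid.rank_bdd (S : Finset E) :
    BddAbove {t | ∃ I : Finset E, I ⊆ S ∧ M.Indep I ∧ I.card = t} := by
  refine ⟨S.card, ?_⟩
  rintro t ⟨I, hIS, -, rfl⟩
  exact Finset.card_le_card hIS

lemma FinMatroid.rank_nonempty (S : Finset E) :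
    {t | ∃ I : Finset E, I ⊆ S ∧ M.Indep I ∧ I.card = t}.Nonempty :=
  ⟨0, ∅, by simp [M.empty_indep]⟩

lemma FinMatroid.card_le_rank {I S : Finset E} (hIS : I ⊆ S) (hI : M.Indep I) :
    I.card ≤ M.rank S :=
  le_csSup (M.rank_bdd S) ⟨I, hIS, hI, rfl⟩

lemma FinMatroid.exists_rank_witness (S : Finset E) :
    ∃ I : Finset E, I ⊆ S ∧ M.Indep I ∧ I.card = M.rank S :=
  Nat.sSup_mem (M.rank_nonempty S) (M.rank_bdd S)

lemma FinMatroid.rank_le_card (S : Finset E) : M.rank S ≤ S.card := by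
  obtain ⟨I, hIS, -, hcard⟩ := M.exists_rank_witness S
  rw [← hcard]; exact Finset.card_le_card hIS

lemma FinMatroid.rank_indep {S : Finset E} (hS : M.Indep S) : M.rank S = S.card :=
  le_antisymm (M.rank_le_card S) (M.card_le_rank le_rfl hS)

lemma FinMatroid.rank_mono {S T : Finset E} (h : S ⊆ T) : M.rank S ≤ M.rank T := by
  obtain ⟨I, hIS, hI, hcard⟩ := M.exists_rank_witness S
  rw [← hcard]; exact M.card_le_rank (hIS.trans h) hI

end RankLemmas

lemma sum_split {n : ℕ} (f : Fin n → ℕ) (i j : Fin n) (hij : i ≠ j) :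
    ∑ k, f k = f i + (f j + ∑ k ∈ (Finset.univ.erase i).erase j, f k) := by
  rw [← Finset.add_sum_erase _ f (Finset.mem_univ i),
    ← Finset.add_sum_erase _ f (Finset.mem_erase.mpr ⟨hij.symm, Finset.mem_univ j⟩)]

/-- Maximin share `μ(k, S)` for a ℕ-valued valuation `v`: the maximum over
`k`-partitions `(Y 0, …, Y (k-1))` of `S` of `min_j v (Y j)`. -/
noncomputable def mmsN {E : Type*} [Fintype E] [DecidableEq E]
    (v : Finset E → ℕ) (k : ℕ) (S : Finset E) : ℕ :=
  sSup {t | ∃ Y : Fin k → Finset E,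
    (∀ a b, a ≠ b → Disjoint (Y a) (Y b)) ∧ Finset.univ.biUnion Y = S ∧
    ∀ j, t ≤ v (Y j)}

/-- Every instance with matroid-rank valuations admits a partial allocation with
independent bundles that maximizes social welfare over all n-partitions and satisfies
the pairwise maximin share guarantee. -/
theorem stmt12 {n m : ℕ} (Ms : Fin n → FinMatroid (Fin m)) :
    ∃ A : Fin n → Finset (Fin m),
      (∀ a b, a ≠ b → Disjoint (A a) (A b)) ∧
      (∀ i, (Ms i).Indep (A i)) ∧
      (∀ B : Fin n → Finset (Fin m),
        (∀ a b, a ≠ b → Disjoint (B a) (B b)) → Finset.univ.biUnion B = Finset.univ →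
        ∑ k, (Ms k).rank (B k) ≤ ∑ k, (Ms k).rank (A k)) ∧
      (∀ i j, mmsN (Ms i).rank 2 (A i ∪ A j) ≤ (Ms i).rank (A i)) := by
  classical
  set Valid : (Fin n → Finset (Fin m)) → Prop := fun A =>
    (∀ a b, a ≠ b → Disjoint (A a) (A b)) ∧ ∀ i, (Ms i).Indep (A i) with hValidDef
  have hValidEmpty : Valid (fun _ => ∅) :=
    ⟨fun a b _ => by simp, fun i => (Ms i).empty_indep⟩
  -- Stage 1: maximize total size among valid partial allocations.
  obtain ⟨A₀, hA₀, hmax⟩ := Set.Finite.exists_maximalFor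
    (fun A : Fin n → Finset (Fin m) => ∑ k, (A k).card)
    {A | Valid A} (Set.toFinite _) ⟨_, hValidEmpty⟩
  set W := ∑ k, (A₀ k).card with hW
  have hmax' : ∀ A, Valid A → ∑ k, (A k).card ≤ W := by
    intro A hA
    rcases le_total (∑ k, (A k).card) W with h | h
    · exact h
    · exact hmax hA h
  -- Stage 2: minimize sum of squares among stage-1 optima.
  obtain ⟨A, ⟨hAv, hAW⟩, hmin⟩ := Set.Finite.exists_minimalFor
    (fun A : Fin n → Finset (Fin m) => ∑ k, (A k).card ^ 2)
    {A | Valid A ∧ ∑ k, (A k).card = W} (Set.toFinite _) ⟨A₀, hA₀, rfl⟩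
  have hmin' : ∀ A', Valid A' → (∑ k, (A' k).card = W) →
      ∑ k, (A k).card ^ 2 ≤ ∑ k, (A' k).card ^ 2 := by
    intro A' hv hw
    rcases le_total (∑ k, (A k).card ^ 2) (∑ k, (A' k).card ^ 2) with h | h
    · exact h
    · exact hmin ⟨hv, hw⟩ h
  -- Exchange property.
  have exchange : ∀ i j, i ≠ j → ∀ g ∈ A j, (Ms i).Indep (insert g (A i)) →
      (A j).card ≤ (A i).card + 1 := by
    intro i j hij g hgj hind
    have hgi : g ∉ A i := fun h => (hAv.1 i j hij).forall_ne_finset h hgj rfl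
    set A' : Fin n → Finset (Fin m) :=
      Function.update (Function.update A i (insert g (A i))) j ((A j).erase g) with hA'
    have hA'i : A' i = insert g (A i) := by
      simp [hA', Function.update_of_ne hij, Function.update_self]
    have hA'j : A' j = (A j).erase g := by simp [hA', Function.update_self]
    have hA'k : ∀ k, k ≠ i → k ≠ j → A' k = A k := by
      intro k hki hkj
      simp [hA', Function.update_of_ne hkj, Function.update_of_ne hki]
    have hgnot : ∀ k, k ≠ j → g ∉ A k := by
      intro k hkj h
      exact (hAv.1 k j hkj).forall_ne_finset h hgj rfl
    have hsub : ∀ k, k ≠ i → A' k ⊆ A k := by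
      intro k hki
      rcases eq_or_ne k j with rfl | hkj
      · rw [hA'j]; exact Finset.erase_subset _ _
      · rw [hA'k k hki hkj]
    have hdisji : ∀ b, b ≠ i → Disjoint (A' i) (A' b) := by
      intro b hbi
      rw [hA'i, Finset.disjoint_insert_left]
      constructor
      · rcases eq_or_ne b j with rfl | hbj
        · rw [hA'j]; exact Finset.notMem_erase _ _
        · rw [hA'k b hbi hbj]; exact hgnot b hbj
      · exact ((hAv.1 i b (Ne.symm hbi)).mono_right (hsub b hbi))
    have hdisj : ∀ a b, a ≠ b → Disjoint (A' a) (A' b) := by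
      intro a b hab
      rcases eq_or_ne a i with rfl | hai
      · exact hdisji b (Ne.symm hab)
      rcases eq_or_ne b i with rfl | hbi
      · exact (hdisji a hai).symm
      · exact ((hAv.1 a b hab).mono (hsub a hai) (hsub b hbi))
    have hindep : ∀ k, (Ms k).Indep (A' k) := by
      intro k
      rcases eq_or_ne k i with rfl | hki
      · rw [hA'i]; exact hind
      rcases eq_or_ne k j with rfl | hkj
      · rw [hA'j]; exact (Ms k).subset_indep (hAv.2 k) (Finset.erase_subset _ _)
      · rw [hA'k k hki hkj]; exact hAv.2 k
    have hbpos : 1 ≤ (A j).card := Finset.card_pos.mpr ⟨g, hgj⟩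
    have hci : (A' i).card = (A i).card + 1 := by
      rw [hA'i, Finset.card_insert_of_notMem hgi]
    have hcj : (A' j).card = (A j).card - 1 := by
      rw [hA'j, Finset.card_erase_of_mem hgj]
    have htail : ∑ k ∈ (Finset.univ.erase i).erase j, (A' k).card
        = ∑ k ∈ (Finset.univ.erase i).erase j, (A k).card := by
      apply Finset.sum_congr rfl
      intro k hk
      rw [Finset.mem_erase, Finset.mem_erase] at hk
      rw [hA'k k hk.2.1 hk.1]
    have htail2 : ∑ k ∈ (Finset.univ.erase i).erase j, (A' k).card ^ 2
        = ∑ k ∈ (Finset.univ.erase i).erase j, (A k).card ^ 2 := by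
      apply Finset.sum_congr rfl
      intro k hk
      rw [Finset.mem_erase, Finset.mem_erase] at hk
      rw [hA'k k hk.2.1 hk.1]
    have hsum : ∑ k, (A' k).card = W := by
      rw [sum_split (fun k => (A' k).card) i j hij, hci, hcj, htail, ← hAW,
        sum_split (fun k => (A k).card) i j hij]
      omega
    have hq := hmin' A' ⟨hdisj, hindep⟩ hsum
    rw [sum_split (fun k => (A' k).card ^ 2) i j hij, hci, hcj, htail2,
      sum_split (fun k => (A k).card ^ 2) i j hij] at hq
    set a := (A i).card
    set b := (A j).card
    obtain ⟨c, hc⟩ : ∃ c, b = c + 1 := ⟨b - 1, by omega⟩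
    rw [hc] at hq ⊢
    simp only [Nat.add_sub_cancel] at hq
    nlinarith [hq]
  have hrankA : ∀ k, (Ms k).rank (A k) = (A k).card := fun k => (Ms k).rank_indep (hAv.2 k)
  refine ⟨A, hAv.1, hAv.2, ?_, ?_⟩
  · -- welfare maximization
    intro B hBd hBu
    choose I hI1 hI2 hI3 using fun k => (Ms k).exists_rank_witness (B k)
    have hIvalid : Valid I := by
      refine ⟨fun a b hab => (hBd a b hab).mono (hI1 a) (hI1 b), hI2⟩
    calc ∑ k, (Ms k).rank (B k) = ∑ k, (I k).card := by
          exact Finset.sum_congr rfl (fun k _ => (hI3 k).symm)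
      _ ≤ W := hmax' I hIvalid
      _ = ∑ k, (Ms k).rank (A k) := by
          rw [← hAW]; exact Finset.sum_congr rfl (fun k _ => (hrankA k).symm)
  · -- pairwise MMS
    intro i j
    rw [mmsN]
    apply csSup_le
    · refine ⟨0, fun b => if b = 0 then A i ∪ A j else ∅, ?_, ?_, fun _ => Nat.zero_le _⟩
      · intro a b hab
        rcases eq_or_ne a 0 with rfl | ha
        · simp [hab.symm]
        · simp [ha]
      · have huniv : (Finset.univ : Finset (Fin 2)) = {0, 1} := by decide
        rw [huniv, Finset.biUnion_insert]
        simp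
    · rintro t ⟨Y, hYd, hYu, hYt⟩
      rw [hrankA]
      by_contra hcon
      push_neg at hcon
      -- t ≥ card (A i) + 1
      have ht : (A i).card + 1 ≤ t := hcon
      -- get an independent subset of Y 0 of size ≥ card (A i) + 1
      obtain ⟨I, hIY, hIind, hIcard⟩ := (Ms i).exists_rank_witness (Y 0)
      have hIbig : (A i).card < I.card := by
        have := hYt 0
        omega
      obtain ⟨g, hg, hind⟩ := (Ms i).aug (hAv.2 i) hIind hIbig
      rw [Finset.mem_sdiff] at hg
      have hgY : g ∈ A i ∪ A j := by
        rw [← hYu]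
        exact Finset.mem_biUnion.mpr ⟨0, Finset.mem_univ _, hIY hg.1⟩
      have hgj : g ∈ A j := by
        rcases Finset.mem_union.mp hgY with h | h
        · exact absurd h hg.2
        · exact h
      have hij : i ≠ j := by
        rintro rfl
        exact hg.2 hgj
      have hb := exchange i j hij g hgj hind
      -- card bound
      have hY0 : t ≤ (Y 0).card := (hYt 0).trans ((Ms i).rank_le_card _)
      have hY1 : t ≤ (Y 1).card := (hYt 1).trans ((Ms i).rank_le_card _)
      have hcards : (Y 0).card + (Y 1).card = (A i).card + (A j).card := by
        have h1 : (Finset.univ.biUnion Y).card = ∑ b, (Y b).card :=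
          Finset.card_biUnion (fun a _ b _ hab => hYd a b hab)
        rw [hYu] at h1
        have h2 : (A i ∪ A j).card = (A i).card + (A j).card :=
          Finset.card_union_of_disjoint (hAv.1 i j hij)
        rw [h2, Fin.sum_univ_two] at h1
        omega
      omega
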